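/- If (x₁,y₁) and (x₂,y₂) both lie in the open square (0, log 2) × (0, log 2) and the gradients of f₂ agree at these two points, i.e. (∂f₂/∂x, ∂f₂/∂y)(x₁,y₁) = (∂f₂/∂x, ∂f₂/∂y)(x₂,y₂), then (x₁,y₁) = (x₂,y₂). -/

import Mathlib

noncomputable def binEnt (p : ℝ) : ℝ := -p * Real.log p - (1 - p) * Real.log (1 - p)

noncomputable def binEntInv (x : ℝ) : ℝ :=
  sInf {p : ℝ | p ∈ Set.Icc (0 : ℝ) (1 / 2) ∧ binEnt p = x}

noncomputable def starOp (p q : ℝ) : ℝ := p * (1 - q) + q * (1 - p)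

noncomputable def f₂ (x y : ℝ) : ℝ := binEnt (starOp (binEntInv x) (binEntInv y))

/-- Shannon entropy (natural log) of a discrete random variable `X` on `(Ω, μ)`. -/
noncomputable def entropy {Ω S : Type*} [MeasurableSpace Ω] (μ : MeasureTheory.Measure Ω)
    (X : Ω → S) : ℝ :=
  ∑' s : S, Real.negMulLog ((μ (X ⁻¹' {s})).toReal)

/-- Conditional Shannon entropy `H(X | U) = H(X, U) - H(U)`. -/
noncomputable def condEntropy {Ω S T : Type*} [MeasurableSpace Ω] (μ : MeasureTheory.Measure Ω)
    (X : Ω → S) (U : Ω → T) : ℝ :=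
  entropy μ (fun ω => (X ω, U ω)) - entropy μ U

/-- Independence of two discrete random variables. -/
def IndepRV {Ω S T : Type*} [MeasurableSpace Ω] (μ : MeasureTheory.Measure Ω)
    (X : Ω → S) (Y : Ω → T) : Prop :=
  ∀ (a : S) (b : T), μ (X ⁻¹' {a} ∩ Y ⁻¹' {b}) = μ (X ⁻¹' {a}) * μ (Y ⁻¹' {b})

/-- Mutual independence of a finite family of discrete random variables. -/
def iIndepRV {Ω G ι : Type*} [Fintype ι] [MeasurableSpace Ω] (μ : MeasureTheory.Measure Ω)
    (X : ι → Ω → G) : Prop :=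
  ∀ a : ι → G, μ (⋂ i, X i ⁻¹' {a i}) = ∏ i, μ (X i ⁻¹' {a i})

/-- `fG G x y` : the minimum entropy `H(X+Y)` over independent `G`-valued random variables
`X, Y` with `H(X) = x` and `H(Y) = y`. -/
noncomputable def fG (G : Type) [AddCommGroup G] (x y : ℝ) : ℝ :=
  sInf { z : ℝ | ∃ (Ω : Type) (_ : MeasurableSpace Ω) (μ : MeasureTheory.Measure Ω),
    MeasureTheory.IsProbabilityMeasure μ ∧ ∃ X Y : Ω → G, IndepRV μ X Y ∧
      entropy μ X = x ∧ entropy μ Y = y ∧ entropy μ (fun ω => X ω + Y ω) = z }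

/-- `fGk G k x` : the minimum entropy `H(X₁ + ⋯ + X_k)` over `k` mutually independent
`G`-valued random variables with `H(Xᵢ) = xᵢ`. -/
noncomputable def fGk (G : Type) [AddCommGroup G] (k : ℕ) (x : Fin k → ℝ) : ℝ :=
  sInf { z : ℝ | ∃ (Ω : Type) (_ : MeasurableSpace Ω) (μ : MeasureTheory.Measure Ω),
    MeasureTheory.IsProbabilityMeasure μ ∧ ∃ X : Fin k → Ω → G, iIndepRV μ X ∧
      (∀ i, entropy μ (X i) = x i) ∧ entropy μ (fun ω => ∑ i, X i ω) = z }

/-- Iterated application `fG G x₁ (fG G x₂ (… (fG G x_{r-1} x_r)…))`. -/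
noncomputable def iterFG (G : Type) [AddCommGroup G] : List ℝ → ℝ
  | [] => 0
  | [a] => a
  | a :: b :: rest => fG G a (iterFG G (b :: rest))


open Real Set

noncomputable def Afun (t : ℝ) : ℝ := Real.log (1 + t) - Real.log (1 - t)

lemma Afun_zero : Afun 0 = 0 := by simp [Afun]

lemma Afun_pos {t : ℝ} (h0 : 0 < t) (h1 : t < 1) : 0 < Afun t := by
  have h1' : Real.log (1 - t) < 0 := Real.log_neg (by linarith) (by linarith)
  have h2' : 0 < Real.log (1 + t) := Real.log_pos (by linarith)
  simp only [Afun]; linarith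

lemma Afun_hasDerivAt {t : ℝ} (h0 : -1 < t) (h1 : t < 1) :
    HasDerivAt Afun (2 / (1 - t^2)) t := by
  have h₁ : HasDerivAt (fun t : ℝ => 1 + t) 1 t := (hasDerivAt_id t).const_add 1
  have h₂ : HasDerivAt (fun t : ℝ => 1 - t) (-1) t := by
    simpa using (hasDerivAt_id t).const_sub 1
  have hl1 : HasDerivAt (fun t : ℝ => Real.log (1 + t)) ((1 + t)⁻¹ * 1) t :=
    (Real.hasDerivAt_log (by linarith)).comp t h₁
  have hl2 : HasDerivAt (fun t : ℝ => Real.log (1 - t)) ((1 - t)⁻¹ * (-1)) t :=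
    (Real.hasDerivAt_log (by linarith)).comp t h₂
  have := hl1.sub hl2
  refine this.congr_deriv ?_
  have e1 : (1:ℝ) + t ≠ 0 := by linarith
  have e2 : (1:ℝ) - t ≠ 0 := by linarith
  have e3 : (1:ℝ) - t^2 ≠ 0 := by nlinarith
  field_simp
  ring

lemma Afun_continuousAt {t : ℝ} (h0 : -1 < t) (h1 : t < 1) : ContinuousAt Afun t :=
  (Afun_hasDerivAt h0 h1).continuousAt

lemma Afun_mono {s t : ℝ} (hs : 0 ≤ s) (hst : s < t) (ht : t < 1) : Afun s < Afun t := by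
  have h1 : Real.log (1 + s) < Real.log (1 + t) := by
    apply Real.log_lt_log (by linarith) (by linarith)
  have h2 : Real.log (1 - t) < Real.log (1 - s) := by
    apply Real.log_lt_log (by linarith) (by linarith)
  simp only [Afun]; linarith

/-- helper: strict monotone comparison from derivative positivity on `Ioo 0 1`. -/
lemma mono_pair {F F' : ℝ → ℝ} (hd : ∀ t ∈ Ioo (0:ℝ) 1, HasDerivAt F (F' t) t)
    (hpos : ∀ t ∈ Ioo (0:ℝ) 1, 0 < F' t) {s t : ℝ} (hs : 0 < s) (hst : s < t) (ht : t < 1) :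
    F s < F t := by
  have hsub : Icc s t ⊆ Ioo (0:ℝ) 1 := fun z hz => ⟨lt_of_lt_of_le hs hz.1, lt_of_le_of_lt hz.2 ht⟩
  have hmono : StrictMonoOn F (Icc s t) := by
    apply strictMonoOn_of_deriv_pos (convex_Icc s t)
    · exact fun z hz => ((hd z (hsub hz)).continuousAt).continuousWithinAt
    · intro z hz
      rw [interior_Icc] at hz
      have hz' := hsub (Ioo_subset_Icc_self hz)
      rw [(hd z hz').deriv]
      exact hpos z hz'
  exact hmono (left_mem_Icc.2 hst.le) (right_mem_Icc.2 hst.le) hst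

lemma anti_pair {F F' : ℝ → ℝ} (hd : ∀ t ∈ Ioo (0:ℝ) 1, HasDerivAt F (F' t) t)
    (hneg : ∀ t ∈ Ioo (0:ℝ) 1, F' t < 0) {s t : ℝ} (hs : 0 < s) (hst : s < t) (ht : t < 1) :
    F t < F s := by
  have := mono_pair (F := fun x => -F x) (F' := fun x => -F' x)
    (fun z hz => (hd z hz).neg) (fun z hz => neg_pos.2 (hneg z hz)) hs hst ht
  change -F s < -F t at this
  linarith

/-- value-at-0 version -/
lemma mono_from_zero {F F' : ℝ → ℝ} (h0 : F 0 = 0)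
    (hd : ∀ t ∈ Ioo (-1:ℝ) 1, HasDerivAt F (F' t) t)
    (hpos : ∀ t ∈ Ioo (0:ℝ) 1, 0 < F' t) {t : ℝ} (h0t : 0 < t) (ht : t < 1) : 0 < F t := by
  have hsub : Icc 0 t ⊆ Ioo (-1:ℝ) 1 := fun z hz =>
    ⟨lt_of_lt_of_le (by norm_num) hz.1, lt_of_le_of_lt hz.2 ht⟩
  have hmono : StrictMonoOn F (Icc 0 t) := by
    apply strictMonoOn_of_deriv_pos (convex_Icc 0 t)
    · exact fun z hz => ((hd z (hsub hz)).continuousAt).continuousWithinAt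
    · intro z hz
      rw [interior_Icc] at hz
      rw [(hd z (hsub (Ioo_subset_Icc_self hz))).deriv]
      exact hpos z ⟨hz.1, lt_trans hz.2 ht⟩
  have := hmono (left_mem_Icc.2 h0t.le) (right_mem_Icc.2 h0t.le) h0t
  rwa [h0] at this

/-- A5 : `2t < A t` -/
lemma Afun_gt {t : ℝ} (h0 : 0 < t) (h1 : t < 1) : 2*t < Afun t := by
  have := mono_from_zero (F := fun t => Afun t - 2*t) (F' := fun t => 2/(1-t^2) - 2)
    (by simp [Afun_zero]) (fun z hz => ((Afun_hasDerivAt hz.1 hz.2).sub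
      (by simpa using (hasDerivAt_id z).const_mul (2:ℝ))))
    (fun z hz => by
      have h2 : (0:ℝ) < 1 - z^2 := by nlinarith [hz.1, hz.2]
      have : (2:ℝ) < 2/(1-z^2) := by
        rw [lt_div_iff₀ h2]; nlinarith [hz.1]
      linarith) h0 h1
  change 0 < Afun t - 2*t at this
  linarith

/-- A6 : `A t * (1-t²)² < 2t(1+t²)` -/
lemma Afun_lt2 {t : ℝ} (h0 : 0 < t) (h1 : t < 1) : Afun t * (1-t^2)^2 < 2*t*(1+t^2) := by
  have key := mono_from_zero (F := fun t => 2*t*(1+t^2)/(1-t^2)^2 - Afun t)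
    (F' := fun t => ((2+6*t^2)*(1-t^2)^2 - 2*t*(1+t^2)*(2*(1-t^2)*(-2*t)))/((1-t^2)^2)^2
      - 2/(1-t^2))
    (by norm_num [Afun_zero])
    (fun z hz => by
      have h2 : (0:ℝ) < 1 - z^2 := by nlinarith [hz.1, hz.2]
      have hnum : HasDerivAt (fun t : ℝ => 2*t*(1+t^2)) (2+6*z^2) z := by
        have : HasDerivAt (fun t : ℝ => 2*t*(1+t^2)) (2*(1+z^2) + 2*z*(2*z)) z := by
          have ha : HasDerivAt (fun t : ℝ => 2*t) 2 z := by
            simpa using (hasDerivAt_id z).const_mul (2:ℝ)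
          have hb : HasDerivAt (fun t : ℝ => 1+t^2) (2*z) z := by
            simpa using ((hasDerivAt_pow 2 z).const_add (1:ℝ))
          exact ha.mul hb
        convert this using 1; ring
      have hden : HasDerivAt (fun t : ℝ => (1-t^2)^2) (2*(1-z^2)*(-2*z)) z := by
        have hb : HasDerivAt (fun t : ℝ => 1-t^2) (-2*z) z := by
          have := (hasDerivAt_pow 2 z).const_sub (1:ℝ)
          simpa using this
        have := (hasDerivAt_pow 2 (1-z^2)).comp z hb
        exact this.congr_deriv (by ring)
      exact (hnum.div hden (by positivity)).sub (Afun_hasDerivAt hz.1 hz.2))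
    (fun z hz => by
      have h2 : (0:ℝ) < 1 - z^2 := by nlinarith [hz.1, hz.2]
      have heq : ((2+6*z^2)*(1-z^2)^2 - 2*z*(1+z^2)*(2*(1-z^2)*(-2*z)))/((1-z^2)^2)^2
          - 2/(1-z^2) = 16*z^2/(1-z^2)^3 := by
        field_simp
        ring
      show 0 < ((2+6*z^2)*(1-z^2)^2 - 2*z*(1+z^2)*(2*(1-z^2)*(-2*z)))/((1-z^2)^2)^2
          - 2/(1-z^2)
      rw [heq]; exact div_pos (by nlinarith [hz.1]) (pow_pos h2 3)) h0 h1
  have h2 : (0:ℝ) < 1 - t^2 := by nlinarith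
  have h3 : 0 < 2*t*(1+t^2)/(1-t^2)^2 - Afun t := key
  rw [sub_pos, lt_div_iff₀ (by positivity)] at h3
  linarith

noncomputable def Wfun (t : ℝ) : ℝ := (1+t^2) * Afun t / (2*t)
noncomputable def Rfun (t : ℝ) : ℝ := (1-t^2) * Afun t / (2*t)

lemma Wfun_hasDerivAt {t : ℝ} (h0 : 0 < t) (h1 : t < 1) :
    HasDerivAt Wfun ((2*t*(1+t^2) - (1-t^2)^2*Afun t)/(2*t^2*(1-t^2))) t := by
  have h2 : (0:ℝ) < 1 - t^2 := by nlinarith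
  have hnum : HasDerivAt (fun t : ℝ => (1+t^2) * Afun t)
      (2*t*Afun t + (1+t^2)*(2/(1-t^2))) t := by
    have hb : HasDerivAt (fun t : ℝ => 1+t^2) (2*t) t := by
      simpa using ((hasDerivAt_pow 2 t).const_add (1:ℝ))
    exact hb.mul (Afun_hasDerivAt (by linarith) h1)
  have hden : HasDerivAt (fun t : ℝ => 2*t) 2 t := by
    simpa using (hasDerivAt_id t).const_mul (2:ℝ)
  have := hnum.div hden (by positivity)
  refine this.congr_deriv ?_
  field_simp
  ring

lemma Rfun_hasDerivAt {t : ℝ} (h0 : 0 < t) (h1 : t < 1) :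
    HasDerivAt Rfun ((2*t - (1+t^2)*Afun t)/(2*t^2)) t := by
  have h2 : (0:ℝ) < 1 - t^2 := by nlinarith
  have hnum : HasDerivAt (fun t : ℝ => (1-t^2) * Afun t)
      ((-2*t)*Afun t + (1-t^2)*(2/(1-t^2))) t := by
    have hb : HasDerivAt (fun t : ℝ => 1-t^2) (-2*t) t := by
      simpa using ((hasDerivAt_pow 2 t).const_sub (1:ℝ))
    exact hb.mul (Afun_hasDerivAt (by linarith) h1)
  have hden : HasDerivAt (fun t : ℝ => 2*t) 2 t := by
    simpa using (hasDerivAt_id t).const_mul (2:ℝ)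
  have := hnum.div hden (by positivity)
  refine this.congr_deriv ?_
  field_simp
  ring

lemma Wfun_mono {s t : ℝ} (hs : 0 < s) (hst : s < t) (ht : t < 1) : Wfun s < Wfun t := by
  apply mono_pair (F' := fun t => (2*t*(1+t^2) - (1-t^2)^2*Afun t)/(2*t^2*(1-t^2)))
    (fun z hz => Wfun_hasDerivAt hz.1 hz.2) _ hs hst ht
  intro z hz
  have h2 : (0:ℝ) < 1 - z^2 := by nlinarith [hz.1, hz.2]
  exact div_pos (by nlinarith [Afun_lt2 hz.1 hz.2])
    (mul_pos (mul_pos (by norm_num : (0:ℝ) < 2) (pow_pos hz.1 2)) h2)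

lemma Rfun_anti {s t : ℝ} (hs : 0 < s) (hst : s < t) (ht : t < 1) : Rfun t < Rfun s := by
  apply anti_pair (F' := fun t => (2*t - (1+t^2)*Afun t)/(2*t^2))
    (fun z hz => Rfun_hasDerivAt hz.1 hz.2) _ hs hst ht
  intro z hz
  apply div_neg_of_neg_of_pos _ (by nlinarith [pow_pos hz.1 2])
  nlinarith [Afun_gt hz.1 hz.2, hz.1, sq_nonneg z]

lemma Rfun_pos {t : ℝ} (h0 : 0 < t) (h1 : t < 1) : 0 < Rfun t := by
  have h2 : (0:ℝ) < 1 - t^2 := by nlinarith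
  exact div_pos (mul_pos h2 (Afun_pos h0 h1)) (by linarith)

lemma Rfun_one : Rfun 1 = 0 := by norm_num [Rfun]

lemma Rfun_continuousOn : ContinuousOn Rfun (Ioc (0:ℝ) 1) := by
  have heq : ∀ t ∈ Ioc (0:ℝ) 1,
      ((1+t)/(2*t)) * ((1-t)*Real.log (1+t) + Real.negMulLog (1-t)) = Rfun t := by
    intro t ht
    rcases eq_or_lt_of_le ht.2 with h | h
    · subst h; norm_num [Rfun]
    · have h0 : (0:ℝ) < t := ht.1
      simp only [Rfun, Afun, Real.negMulLog]
      field_simp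
      ring
  apply ContinuousOn.congr _ (fun t ht => (heq t ht).symm)
  intro t ht
  have h0 : (0:ℝ) < t := ht.1
  apply ContinuousAt.continuousWithinAt
  have c1 : ContinuousAt (fun t : ℝ => (1+t)/(2*t)) t := by
    apply ContinuousAt.div (by fun_prop) (by fun_prop)
    exact ne_of_gt (by linarith : (0:ℝ) < 2*t)
  have c2 : ContinuousAt (fun t : ℝ => (1-t) * Real.log (1+t)) t := by
    apply ContinuousAt.mul (by fun_prop)
    exact (Real.continuousAt_log (by linarith)).comp (by fun_prop)
  have c3 : ContinuousAt (fun t : ℝ => Real.negMulLog (1-t)) t :=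
    (Real.continuous_negMulLog.comp (continuous_const.sub continuous_id)).continuousAt
  exact c1.mul (c2.add c3)

lemma R_subadd {u v : ℝ} (hu0 : 0 < u) (hu1 : u < 1) (hv0 : 0 < v) (hv1 : v < 1) :
    Rfun (u*v) < Rfun u + Rfun v := by
  set G : ℝ → ℝ := fun w => Rfun u + Rfun w - Rfun (u*w) with hG
  have hanti : StrictAntiOn G (Icc v 1) := by
    apply strictAntiOn_of_deriv_neg (convex_Icc v 1)
    · apply ContinuousOn.sub (ContinuousOn.add continuousOn_const ?_) ?_
      · exact Rfun_continuousOn.mono (fun z hz => ⟨lt_of_lt_of_le hv0 hz.1, hz.2⟩)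
      · intro z hz
        have huz0 : 0 < u*z := mul_pos hu0 (lt_of_lt_of_le hv0 hz.1)
        have huz1 : u*z < 1 := by nlinarith [hz.2, lt_of_lt_of_le hv0 hz.1]
        exact ((Rfun_hasDerivAt huz0 huz1).continuousAt.comp
          (by exact (continuous_const.mul continuous_id).continuousAt)).continuousWithinAt
    · intro z hz
      rw [interior_Icc] at hz
      have hz0 : 0 < z := lt_trans hv0 hz.1
      have hz1 : z < 1 := hz.2
      have huz0 : 0 < u*z := mul_pos hu0 hz0
      have huz1 : u*z < z := by nlinarith
      have hd1 : HasDerivAt (fun w => Rfun (u*w))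
          (((2*(u*z) - (1+(u*z)^2)*Afun (u*z))/(2*(u*z)^2)) * u) z := by
        apply HasDerivAt.comp z (Rfun_hasDerivAt huz0 (lt_trans huz1 hz1))
        simpa using (hasDerivAt_id z).const_mul u
      have hd : HasDerivAt G ((2*z - (1+z^2)*Afun z)/(2*z^2)
          - ((2*(u*z) - (1+(u*z)^2)*Afun (u*z))/(2*(u*z)^2)) * u) z :=
        (((Rfun_hasDerivAt hz0 hz1).const_add (Rfun u)).sub hd1)
      rw [hd.deriv]
      have hW : Wfun (u*z) < Wfun z := Wfun_mono huz0 huz1 hz1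
      have hrw : (2*z - (1+z^2)*Afun z)/(2*z^2)
          - ((2*(u*z) - (1+(u*z)^2)*Afun (u*z))/(2*(u*z)^2)) * u
          = (Wfun (u*z) - Wfun z)/z := by
        simp only [Wfun]
        field_simp
        ring
      rw [hrw]
      exact div_neg_of_neg_of_pos (by linarith) hz0
  have hkey := hanti (left_mem_Icc.2 hv1.le) (right_mem_Icc.2 hv1.le) hv1
  simp only [hG, mul_one, Rfun_one] at hkey
  linarith

section Inverse
variable {f g : ℝ → ℝ} {a b : ℝ}

lemma inv_left_inv (hab : a < b) (hf : StrictMonoOn f (Icc a b))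
    (hfg : ∀ y ∈ Icc (f a) (f b), g y ∈ Icc a b ∧ f (g y) = y) :
    ∀ x ∈ Icc a b, g (f x) = x := by
  intro x hx
  have hfx : f x ∈ Icc (f a) (f b) :=
    ⟨hf.monotoneOn (left_mem_Icc.2 hab.le) hx hx.1, hf.monotoneOn hx (right_mem_Icc.2 hab.le) hx.2⟩
  obtain ⟨hmem, heq⟩ := hfg (f x) hfx
  exact hf.injOn hmem hx heq

lemma inv_monotoneOn (hab : a < b) (hf : StrictMonoOn f (Icc a b))
    (hfg : ∀ y ∈ Icc (f a) (f b), g y ∈ Icc a b ∧ f (g y) = y) :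
    MonotoneOn g (Icc (f a) (f b)) := by
  intro y hy y' hy' hyy'
  by_contra h
  push_neg at h
  have := hf (hfg y' hy').1 (hfg y hy).1 h
  rw [(hfg y hy).2, (hfg y' hy').2] at this
  exact absurd hyy' (not_le.2 this)

lemma inv_image_supset (hab : a < b) (hf : StrictMonoOn f (Icc a b))
    (hfg : ∀ y ∈ Icc (f a) (f b), g y ∈ Icc a b ∧ f (g y) = y) :
    Icc a b ⊆ g '' (Icc (f a) (f b)) := by
  intro x hx
  have hfx : f x ∈ Icc (f a) (f b) :=
    ⟨hf.monotoneOn (left_mem_Icc.2 hab.le) hx hx.1, hf.monotoneOn hx (right_mem_Icc.2 hab.le) hx.2⟩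
  exact ⟨f x, hfx, inv_left_inv hab hf hfg x hx⟩

lemma inv_mem_Ioo (hab : a < b) (hf : StrictMonoOn f (Icc a b))
    (hfg : ∀ y ∈ Icc (f a) (f b), g y ∈ Icc a b ∧ f (g y) = y)
    {y : ℝ} (hy : y ∈ Ioo (f a) (f b)) : g y ∈ Ioo a b := by
  obtain ⟨hmem, heq⟩ := hfg y (Ioo_subset_Icc_self hy)
  rcases eq_or_lt_of_le hmem.1 with h | h
  · exfalso; rw [← h] at heq; rw [heq] at hy; exact lt_irrefl _ hy.1
  rcases eq_or_lt_of_le hmem.2 with h2 | h2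
  · exfalso; rw [h2] at heq; rw [heq] at hy; exact lt_irrefl _ hy.2
  exact ⟨h, h2⟩

lemma inv_continuousAt (hab : a < b) (hf : StrictMonoOn f (Icc a b))
    (hfg : ∀ y ∈ Icc (f a) (f b), g y ∈ Icc a b ∧ f (g y) = y)
    {y : ℝ} (hy : y ∈ Ioo (f a) (f b)) : ContinuousAt g y := by
  apply continuousAt_of_monotoneOn_of_image_mem_nhds (inv_monotoneOn hab hf hfg)
    (Icc_mem_nhds hy.1 hy.2)
  have hgy : g y ∈ Ioo a b := inv_mem_Ioo hab hf hfg hy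
  exact Filter.mem_of_superset (Icc_mem_nhds hgy.1 hgy.2) (inv_image_supset hab hf hfg)

lemma inv_continuousOn (hab : a < b) (hf : StrictMonoOn f (Icc a b))
    (hfg : ∀ y ∈ Icc (f a) (f b), g y ∈ Icc a b ∧ f (g y) = y) :
    ContinuousOn g (Icc (f a) (f b)) := by
  have hfab : f a < f b := hf (left_mem_Icc.2 hab.le) (right_mem_Icc.2 hab.le) hab
  have hga : g (f a) = a := inv_left_inv hab hf hfg a (left_mem_Icc.2 hab.le)
  have hgb : g (f b) = b := inv_left_inv hab hf hfg b (right_mem_Icc.2 hab.le)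
  intro y hy
  rcases eq_or_lt_of_le hy.1 with h | h
  · apply ContinuousWithinAt.mono _ Icc_subset_Ici_self
    rw [← h]
    apply continuousWithinAt_right_of_monotoneOn_of_image_mem_nhdsWithin
      (inv_monotoneOn hab hf hfg)
      (Icc_mem_nhdsGE_of_mem ⟨le_refl _, hfab⟩)
    rw [hga]
    exact Filter.mem_of_superset (Icc_mem_nhdsGE_of_mem ⟨le_refl _, hab⟩) (inv_image_supset hab hf hfg)
  rcases eq_or_lt_of_le hy.2 with h2 | h2
  · apply ContinuousWithinAt.mono _ Icc_subset_Iic_self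
    rw [h2]
    apply continuousWithinAt_left_of_monotoneOn_of_image_mem_nhdsWithin
      (inv_monotoneOn hab hf hfg)
      (Icc_mem_nhdsLE_of_mem ⟨hfab, le_refl _⟩)
    rw [hgb]
    exact Filter.mem_of_superset (Icc_mem_nhdsLE_of_mem ⟨hab, le_refl _⟩) (inv_image_supset hab hf hfg)
  · exact (inv_continuousAt hab hf hfg ⟨h, h2⟩).continuousWithinAt

lemma inv_hasDerivAt (hab : a < b) (hf : StrictMonoOn f (Icc a b))
    (hfg : ∀ y ∈ Icc (f a) (f b), g y ∈ Icc a b ∧ f (g y) = y)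
    {y : ℝ} (hy : y ∈ Ioo (f a) (f b)) {f' : ℝ} (hder : HasDerivAt f f' (g y)) (hf' : f' ≠ 0) :
    HasDerivAt g f'⁻¹ y := by
  apply HasDerivAt.of_local_left_inverse (inv_continuousAt hab hf hfg hy) hder hf'
  filter_upwards [Ioo_mem_nhds hy.1 hy.2] with z hz
  exact (hfg z (Ioo_subset_Icc_self hz)).2

end Inverse

/-- generic: the `sInf` of solutions is an inverse, for continuous strictly monotone `f`. -/
lemma sInf_inv_spec {f : ℝ → ℝ} {a b : ℝ} (hab : a ≤ b) (hf : StrictMonoOn f (Icc a b))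
    (hc : ContinuousOn f (Icc a b)) {y : ℝ} (hy : y ∈ Icc (f a) (f b)) :
    sInf {x : ℝ | x ∈ Icc a b ∧ f x = y} ∈ Icc a b ∧ f (sInf {x : ℝ | x ∈ Icc a b ∧ f x = y}) = y := by
  obtain ⟨p, hp, hpy⟩ := intermediate_value_Icc hab hc hy
  have hset : {x : ℝ | x ∈ Icc a b ∧ f x = y} = {p} := by
    ext z
    simp only [mem_setOf_eq, mem_singleton_iff]
    constructor
    · rintro ⟨hz, hzy⟩
      exact hf.injOn hz hp (by rw [hzy, hpy])
    · rintro rfl; exact ⟨hp, hpy⟩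
  rw [hset, csInf_singleton]
  exact ⟨hp, hpy⟩

lemma binEnt_eq : binEnt = Real.binEntropy := by
  funext p
  simp only [binEnt, Real.binEntropy, Real.log_inv]
  ring

lemma binEnt_zero : binEnt 0 = 0 := by simp [binEnt]
lemma binEnt_half : binEnt (1/2) = Real.log 2 := by
  rw [binEnt_eq, show (1:ℝ)/2 = 2⁻¹ by norm_num]; exact Real.binEntropy_two_inv

lemma binEnt_strictMonoOn : StrictMonoOn binEnt (Icc 0 (1/2)) := by
  rw [binEnt_eq, show (1:ℝ)/2 = 2⁻¹ by norm_num]; exact Real.binEntropy_strictMonoOn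

lemma binEnt_continuous : Continuous binEnt := by
  rw [binEnt_eq]; exact Real.binEntropy_continuous

lemma binEnt_hasDerivAt {p : ℝ} (h0 : p ≠ 0) (h1 : p ≠ 1) :
    HasDerivAt binEnt (Real.log (1 - p) - Real.log p) p := by
  rw [binEnt_eq]; exact Real.hasDerivAt_binEntropy h0 h1

lemma binEntInv_spec {y : ℝ} (hy : y ∈ Icc 0 (Real.log 2)) :
    binEntInv y ∈ Icc 0 (1/2) ∧ binEnt (binEntInv y) = y := by
  have := sInf_inv_spec (by norm_num : (0:ℝ) ≤ 1/2) binEnt_strictMonoOn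
    binEnt_continuous.continuousOn (y := y) (by rwa [binEnt_zero, binEnt_half])
  exact this

lemma binEntInv_spec' {y : ℝ} (hy : y ∈ Icc (binEnt 0) (binEnt (1/2))) :
    binEntInv y ∈ Icc 0 (1/2) ∧ binEnt (binEntInv y) = y :=
  binEntInv_spec (by rwa [binEnt_zero, binEnt_half] at hy)

lemma binEntInv_mem_Ioo {y : ℝ} (hy : y ∈ Ioo 0 (Real.log 2)) :
    binEntInv y ∈ Ioo 0 (1/2) := by
  apply inv_mem_Ioo (by norm_num : (0:ℝ) < 1/2) binEnt_strictMonoOn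
    (fun z hz => binEntInv_spec' hz)
  rwa [binEnt_zero, binEnt_half]

lemma L_pos {p : ℝ} (h0 : 0 < p) (h1 : p < 1/2) : 0 < Real.log (1 - p) - Real.log p := by
  have := Real.log_lt_log h0 (by linarith : p < 1 - p)
  linarith

lemma binEntInv_hasDerivAt {y : ℝ} (hy : y ∈ Ioo 0 (Real.log 2)) :
    HasDerivAt binEntInv (Real.log (1 - binEntInv y) - Real.log (binEntInv y))⁻¹ y := by
  have hp := binEntInv_mem_Ioo hy
  apply inv_hasDerivAt (by norm_num : (0:ℝ) < 1/2) binEnt_strictMonoOn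
    (fun z hz => binEntInv_spec' hz)
  · rwa [binEnt_zero, binEnt_half]
  · exact binEnt_hasDerivAt (ne_of_gt hp.1) (by linarith [hp.2])
  · exact ne_of_gt (L_pos hp.1 hp.2)

lemma starOp_mem {p q : ℝ} (hp : p ∈ Ioo 0 (1/2)) (hq : q ∈ Ioo 0 (1/2)) :
    starOp p q ∈ Ioo 0 (1/2) := by
  obtain ⟨hp0, hp1⟩ := hp; obtain ⟨hq0, hq1⟩ := hq
  constructor
  · simp only [starOp]; nlinarith
  · simp only [starOp]; nlinarith

lemma f2_deriv_fst {x y : ℝ} (hx : x ∈ Ioo 0 (Real.log 2)) (hy : y ∈ Ioo 0 (Real.log 2)) :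
    deriv (fun t => f₂ t y) x =
      (Real.log (1 - starOp (binEntInv x) (binEntInv y))
        - Real.log (starOp (binEntInv x) (binEntInv y)))
      * ((1 - 2*binEntInv y) * (Real.log (1 - binEntInv x) - Real.log (binEntInv x))⁻¹) := by
  have hp := binEntInv_mem_Ioo hx
  have hq := binEntInv_mem_Ioo hy
  have hr := starOp_mem hp hq
  have h1 : HasDerivAt binEntInv (Real.log (1 - binEntInv x) - Real.log (binEntInv x))⁻¹ x :=
    binEntInv_hasDerivAt hx
  have h2 : HasDerivAt (fun t => starOp (binEntInv t) (binEntInv y))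
      ((1 - 2*binEntInv y) * (Real.log (1 - binEntInv x) - Real.log (binEntInv x))⁻¹) x := by
    have heq : (fun t => starOp (binEntInv t) (binEntInv y))
        = fun t => (1 - 2*binEntInv y) * binEntInv t + binEntInv y := by
      funext t; simp only [starOp]; ring
    rw [heq]
    exact (h1.const_mul _).add_const _
  have h3 : HasDerivAt binEnt
      (Real.log (1 - starOp (binEntInv x) (binEntInv y))
        - Real.log (starOp (binEntInv x) (binEntInv y)))
      (starOp (binEntInv x) (binEntInv y)) :=
    binEnt_hasDerivAt (ne_of_gt hr.1) (by linarith [hr.2])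
  have h4 := h3.comp x h2
  have : (fun t => f₂ t y) = binEnt ∘ (fun t => starOp (binEntInv t) (binEntInv y)) := rfl
  rw [this, h4.deriv]

lemma f2_deriv_snd {x y : ℝ} (hx : x ∈ Ioo 0 (Real.log 2)) (hy : y ∈ Ioo 0 (Real.log 2)) :
    deriv (fun t => f₂ x t) y =
      (Real.log (1 - starOp (binEntInv x) (binEntInv y))
        - Real.log (starOp (binEntInv x) (binEntInv y)))
      * ((1 - 2*binEntInv x) * (Real.log (1 - binEntInv y) - Real.log (binEntInv y))⁻¹) := by
  have hp := binEntInv_mem_Ioo hx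
  have hq := binEntInv_mem_Ioo hy
  have hr := starOp_mem hp hq
  have h1 : HasDerivAt binEntInv (Real.log (1 - binEntInv y) - Real.log (binEntInv y))⁻¹ y :=
    binEntInv_hasDerivAt hy
  have h2 : HasDerivAt (fun t => starOp (binEntInv x) (binEntInv t))
      ((1 - 2*binEntInv x) * (Real.log (1 - binEntInv y) - Real.log (binEntInv y))⁻¹) y := by
    have heq : (fun t => starOp (binEntInv x) (binEntInv t))
        = fun t => (1 - 2*binEntInv x) * binEntInv t + binEntInv x := by
      funext t; simp only [starOp]; ring
    rw [heq]
    exact (h1.const_mul _).add_const _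
  have h3 : HasDerivAt binEnt
      (Real.log (1 - starOp (binEntInv x) (binEntInv y))
        - Real.log (starOp (binEntInv x) (binEntInv y)))
      (starOp (binEntInv x) (binEntInv y)) :=
    binEnt_hasDerivAt (ne_of_gt hr.1) (by linarith [hr.2])
  have h4 := h3.comp y h2
  have : (fun t => f₂ x t) = binEnt ∘ (fun t => starOp (binEntInv x) (binEntInv t)) := rfl
  rw [this, h4.deriv]

lemma L_eq_Afun {p : ℝ} (h0 : 0 < p) (h1 : p < 1) :
    Real.log (1-p) - Real.log p = Afun (1-2*p) := by
  simp only [Afun]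
  have e1 : (1:ℝ) + (1-2*p) = 2*(1-p) := by ring
  have e2 : (1:ℝ) - (1-2*p) = 2*p := by ring
  rw [e1, e2, Real.log_mul two_ne_zero (by linarith : (1:ℝ) - p ≠ 0),
    Real.log_mul two_ne_zero (ne_of_gt h0)]
  ring

lemma starOp_one_sub {p q : ℝ} : 1 - 2*starOp p q = (1-2*p)*(1-2*q) := by
  simp only [starOp]; ring

lemma G1_anti_u {v : ℝ} (hv : v ∈ Ioo (0:ℝ) 1) {u u' : ℝ} (hu : 0 < u) (huu' : u < u')
    (hu' : u' < 1) : v * Afun (u'*v) / Afun u' < v * Afun (u*v) / Afun u := by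
  apply anti_pair (F := fun u => v * Afun (u*v) / Afun u)
    (F' := fun u => ((v * (2/(1-(u*v)^2) * v)) * Afun u
      - v * Afun (u*v) * (2/(1-u^2))) / (Afun u)^2)
    _ _ hu huu' hu'
  · intro z hz
    have hs0 : 0 < z*v := mul_pos hz.1 hv.1
    have hs1 : z*v < 1 := by nlinarith [hz.2, hv.2, hz.1, hv.1]
    have hinner : HasDerivAt (fun u : ℝ => u*v) v z := by
      simpa using (hasDerivAt_id z).mul_const v
    have hc : HasDerivAt (fun u => Afun (u*v)) (2/(1-(z*v)^2) * v) z :=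
      by have := (Afun_hasDerivAt (by linarith) hs1).comp z hinner; exact this
    have hnum : HasDerivAt (fun u => v * Afun (u*v)) (v * (2/(1-(z*v)^2) * v)) z :=
      hc.const_mul v
    exact hnum.div (Afun_hasDerivAt (by linarith [hz.1]) hz.2) (ne_of_gt (Afun_pos hz.1 hz.2))
  · intro z hz
    have hs0 : 0 < z*v := mul_pos hz.1 hv.1
    have hsz : z*v < z := by nlinarith [hz.1, hv.2]
    have hs1 : z*v < 1 := lt_trans hsz hz.2
    have h1z : (0:ℝ) < 1 - z^2 := by nlinarith [hz.1, hz.2]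
    have h1s : (0:ℝ) < 1 - (z*v)^2 := by nlinarith
    apply div_neg_of_neg_of_pos _ (pow_pos (Afun_pos hz.1 hz.2) 2)
    have hR : Rfun z < Rfun (z*v) := Rfun_anti hs0 hsz hz.2
    simp only [Rfun] at hR
    rw [div_lt_div_iff₀ (by linarith : (0:ℝ) < 2*z) (by linarith : (0:ℝ) < 2*(z*v))] at hR
    have key : (1-z^2)*Afun z*v < (1-(z*v)^2)*Afun (z*v) := by nlinarith [hz.1, hR]
    have e1 : v * (2/(1-(z*v)^2) * v) * Afun z = 2*(v^2*Afun z)/(1-(z*v)^2) := by ring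
    have e2 : v * Afun (z*v) * (2/(1-z^2)) = 2*(v*Afun (z*v))/(1-z^2) := by ring
    rw [sub_neg, e1, e2, div_lt_div_iff₀ h1s h1z]
    nlinarith [hv.1, key]

lemma G1_mono_v {u : ℝ} (hu : u ∈ Ioo (0:ℝ) 1) {v v' : ℝ} (hv : 0 < v) (hvv' : v < v')
    (hv' : v' < 1) : v * Afun (u*v) / Afun u < v' * Afun (u*v') / Afun u := by
  have hA := Afun_pos hu.1 hu.2
  rw [div_lt_div_iff₀ hA hA]
  have h1 : u*v < u*v' := by nlinarith [hu.1]
  have h2 : u*v' < 1 := by nlinarith [hu.2, hu.1]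
  have h3 : Afun (u*v) < Afun (u*v') := Afun_mono (le_of_lt (mul_pos hu.1 hv)) h1 h2
  have h4 : 0 < Afun (u*v) := Afun_pos (mul_pos hu.1 hv) (lt_trans h1 h2)
  have h5 : v * Afun (u*v) < v' * Afun (u*v') := by nlinarith
  exact mul_lt_mul_of_pos_right h5 hA

lemma signT_aux {u mu mw ms : ℝ} (hu0 : 0 < u) (h1mw : 0 < 1+mw)
    (hcore : 1 * (mu * mw) < (1 * mw + mu * 1) * ms) (hms0 : 0 < ms) :
    0 < u⁻¹ + (1+mu)/(u*(1+mw)) + 2*(ms*(1 + (1+mu)/(1+mw))/u) - mu/u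
      - mw*((1+mu)/(1+mw))/u := by
  have hT : u⁻¹ + (1+mu)/(u*(1+mw)) + 2*(ms*(1 + (1+mu)/(1+mw))/u) - mu/u
      - mw*((1+mu)/(1+mw))/u
      = ((1+2*ms)*(2+mu+mw) - mu*(1+mw) - mw*(1+mu)) / (u*(1+mw)) := by
    field_simp
    ring
  rw [hT]
  apply div_pos _ (by positivity)
  nlinarith [hcore, hms0]

/-- The derivative of `log P` along the curve is positive. -/
lemma sign_core {u w ρ dV : ℝ} (hu : u ∈ Ioo (0:ℝ) 1) (hw : w ∈ Ioo (0:ℝ) 1)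
    (hρ : w * Afun w = ρ * (u * Afun u))
    (hdV : dV = (Afun w + w*(2/(1-w^2)))⁻¹ * (ρ * (Afun u + u*(2/(1-u^2))))) :
    0 < u⁻¹ + (w⁻¹ * dV)
      + 2*((Afun (u*w))⁻¹ * (2/(1-(u*w)^2) * (1*w + u*dV)))
      - (Afun u)⁻¹ * (2/(1-u^2))
      - (Afun w)⁻¹ * (2/(1-w^2) * dV) := by
  obtain ⟨hu0, hu1⟩ := hu
  obtain ⟨hw0, hw1⟩ := hw
  have hs0 : 0 < u*w := mul_pos hu0 hw0
  have hs1 : u*w < 1 := by nlinarith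
  have h1u : (0:ℝ) < 1-u^2 := by nlinarith
  have h1w : (0:ℝ) < 1-w^2 := by nlinarith
  have h1s : (0:ℝ) < 1-(u*w)^2 := by nlinarith
  have ha : 0 < Afun u := Afun_pos hu0 hu1
  have hb : 0 < Afun w := Afun_pos hw0 hw1
  have hc : 0 < Afun (u*w) := Afun_pos hs0 hs1
  -- the "m" quantities
  have hmu0 : 0 < u*(2/(1-u^2))/Afun u := by positivity
  have hmw0 : 0 < w*(2/(1-w^2))/Afun w := by positivity
  have hms0 : 0 < (u*w)*(2/(1-(u*w)^2))/Afun (u*w) := by positivity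
  -- core inequality in 1/m form
  have hcore := R_subadd hu0 hu1 hw0 hw1
  have e1 : Rfun u = 1/(u*(2/(1-u^2))/Afun u) := by
    apply eq_one_div_of_mul_eq_one_left
    simp only [Rfun]; field_simp
  have e2 : Rfun w = 1/(w*(2/(1-w^2))/Afun w) := by
    apply eq_one_div_of_mul_eq_one_left
    simp only [Rfun]; field_simp
  have e3 : Rfun (u*w) = 1/((u*w)*(2/(1-(u*w)^2))/Afun (u*w)) := by
    apply eq_one_div_of_mul_eq_one_left
    have h1s' : (1:ℝ) - u^2*w^2 ≠ 0 := by rw [← mul_pow]; exact h1s.ne'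
    simp only [Rfun]; field_simp
  rw [e1, e2, e3] at hcore
  rw [div_add_div _ _ hmu0.ne' hmw0.ne', div_lt_div_iff₀ hms0 (mul_pos hmu0 hmw0)] at hcore
  -- hcore : 1 * (mu * mw) < (mw + mu) * ms
  set mu := u*(2/(1-u^2))/Afun u with hmu_def
  set mw := w*(2/(1-w^2))/Afun w with hmw_def
  set ms := (u*w)*(2/(1-(u*w)^2))/Afun (u*w) with hms_def
  clear_value mu mw ms
  have hφw : 0 < Afun w + w*(2/(1-w^2)) := by positivity
  have h1mw : 0 < 1 + mw := by linarith
  have h1mu : 0 < 1 + mu := by linarith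
  have hρval : ρ = (w * Afun w)/(u * Afun u) := by
    rw [eq_div_iff (by positivity : u * Afun u ≠ 0)]; linarith [hρ]
  have hbw : Afun w + w*(2/(1-w^2)) = Afun w * (1 + mw) := by
    rw [hmw_def]; field_simp
  have hau : Afun u + u*(2/(1-u^2)) = Afun u * (1 + mu) := by
    rw [hmu_def]; field_simp
  have hdV' : dV = w*(1+mu)/(u*(1+mw)) := by
    rw [hdV, hρval, hbw, hau]
    rw [mul_inv]
    field_simp
  -- term-by-term conversion
  have ht2 : w⁻¹ * dV = (1+mu)/(u*(1+mw)) := by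
    rw [hdV']; field_simp
  have ht3 : (Afun (u*w))⁻¹ * (2/(1-(u*w)^2) * (1*w + u*dV))
      = ms * (1 + (1+mu)/(1+mw)) / u := by
    rw [hdV', hms_def]; field_simp
  have ht4 : (Afun u)⁻¹ * (2/(1-u^2)) = mu/u := by
    rw [hmu_def]; field_simp
  have ht5 : (Afun w)⁻¹ * (2/(1-w^2) * dV) = mw*((1+mu)/(1+mw))/u := by
    rw [hdV', hmw_def]; field_simp
  rw [ht2, ht3, ht4, ht5]
  exact signT_aux hu0 h1mw hcore hms0

noncomputable def Phi (t : ℝ) : ℝ := t * Afun t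

lemma Phi_pos {t : ℝ} (h0 : 0 < t) (h1 : t < 1) : 0 < Phi t :=
  mul_pos h0 (Afun_pos h0 h1)

lemma Phi_lt {s t : ℝ} (hs : 0 < s) (hst : s < t) (ht : t < 1) : Phi s < Phi t := by
  have h1 : Afun s < Afun t := Afun_mono hs.le hst ht
  have h2 : 0 < Afun s := Afun_pos hs (lt_trans hst ht)
  simp only [Phi]; nlinarith

lemma Phi_hasDerivAt {t : ℝ} (h0 : 0 < t) (h1 : t < 1) :
    HasDerivAt Phi (Afun t + t*(2/(1-t^2))) t := by
  show HasDerivAt (fun t => t * Afun t) _ t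
  exact ((hasDerivAt_id' t).mul (Afun_hasDerivAt (by linarith) h1)).congr_deriv (by ring)

lemma Phi'_pos {t : ℝ} (h0 : 0 < t) (h1 : t < 1) : 0 < Afun t + t*(2/(1-t^2)) := by
  have h2 : (0:ℝ) < 1 - t^2 := by nlinarith
  have := Afun_pos h0 h1
  positivity

lemma curve_contra {u₁ u₂ v₁ v₂ : ℝ} (hu₁ : u₁ ∈ Ioo (0:ℝ) 1) (hu₂ : u₂ ∈ Ioo (0:ℝ) 1)
    (hv₁ : v₁ ∈ Ioo (0:ℝ) 1) (hv₂ : v₂ ∈ Ioo (0:ℝ) 1) (hu : u₁ < u₂) (hv : v₁ < v₂)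
    (E1 : v₁ * Afun (u₁*v₁) / Afun u₁ = v₂ * Afun (u₂*v₂) / Afun u₂)
    (E2 : u₁ * Afun (u₁*v₁) / Afun v₁ = u₂ * Afun (u₂*v₂) / Afun v₂) : False := by
  have ha₁ : 0 < Afun u₁ := Afun_pos hu₁.1 hu₁.2
  have ha₂ : 0 < Afun u₂ := Afun_pos hu₂.1 hu₂.2
  have hb₁ : 0 < Afun v₁ := Afun_pos hv₁.1 hv₁.2
  have hb₂ : 0 < Afun v₂ := Afun_pos hv₂.1 hv₂.2
  have hs₁0 : 0 < u₁*v₁ := mul_pos hu₁.1 hv₁.1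
  have hs₁1 : u₁*v₁ < 1 := by nlinarith [hu₁.1, hu₁.2, hv₁.1, hv₁.2]
  have hs₂0 : 0 < u₂*v₂ := mul_pos hu₂.1 hv₂.1
  have hs₂1 : u₂*v₂ < 1 := by nlinarith [hu₂.1, hu₂.2, hv₂.1, hv₂.2]
  have hc₁ : 0 < Afun (u₁*v₁) := Afun_pos hs₁0 hs₁1
  have hc₂ : 0 < Afun (u₂*v₂) := Afun_pos hs₂0 hs₂1
  -- cross-multiplied forms
  rw [div_eq_div_iff ha₁.ne' ha₂.ne'] at E1
  rw [div_eq_div_iff hb₁.ne' hb₂.ne'] at E2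
  -- ratio and product identities
  have h3 : (v₁ * Afun (u₁*v₁) * Afun u₂) * (u₂ * Afun (u₂*v₂) * Afun v₁)
      = (v₂ * Afun (u₂*v₂) * Afun u₁) * (u₁ * Afun (u₁*v₁) * Afun v₂) := by
    rw [E1, ← E2]
  have h4 : (v₁ * Afun v₁ * (u₂ * Afun u₂)) * (Afun (u₁*v₁) * Afun (u₂*v₂))
      = (v₂ * Afun v₂ * (u₁ * Afun u₁)) * (Afun (u₁*v₁) * Afun (u₂*v₂)) := by
    linear_combination h3
  have hRatio : Phi v₂ * Phi u₁ = Phi v₁ * Phi u₂ := by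
    have := mul_right_cancel₀ (mul_ne_zero hc₁.ne' hc₂.ne') h4
    simp only [Phi]
    linear_combination -this
  have h5 : (v₁ * Afun (u₁*v₁) * Afun u₂) * (u₁ * Afun (u₁*v₁) * Afun v₂)
      = (v₂ * Afun (u₂*v₂) * Afun u₁) * (u₂ * Afun (u₂*v₂) * Afun v₁) := by
    rw [E1, E2]
  have hprod : (u₁*v₁) * Afun (u₁*v₁)^2 * (Afun u₂ * Afun v₂)
      = (u₂*v₂) * Afun (u₂*v₂)^2 * (Afun u₁ * Afun v₁) := by
    linear_combination h5
  set ρ := Phi v₁ / Phi u₁ with hρ_def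
  have hΦu₁ : 0 < Phi u₁ := Phi_pos hu₁.1 hu₁.2
  have hΦu₂ : 0 < Phi u₂ := Phi_pos hu₂.1 hu₂.2
  have hΦv₁ : 0 < Phi v₁ := Phi_pos hv₁.1 hv₁.2
  have hΦv₂ : 0 < Phi v₂ := Phi_pos hv₂.1 hv₂.2
  have hρ0 : 0 < ρ := div_pos hΦv₁ hΦu₁
  have hρ1 : Phi v₁ = ρ * Phi u₁ := by rw [hρ_def]; field_simp
  have hρ2 : Phi v₂ = ρ * Phi u₂ := by
    rw [hρ_def, div_mul_eq_mul_div, eq_div_iff hΦu₁.ne']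
    linarith [hRatio]
  have hPhiMono : StrictMonoOn Phi (Icc v₁ v₂) :=
    fun p hp q hq hpq => Phi_lt (lt_of_lt_of_le hv₁.1 hp.1) hpq (lt_of_le_of_lt hq.2 hv₂.2)
  have hPhiCont : ContinuousOn Phi (Icc v₁ v₂) := by
    intro t ht
    have h0 : 0 < t := lt_of_lt_of_le hv₁.1 ht.1
    have h1 : t < 1 := lt_of_le_of_lt ht.2 hv₂.2
    exact (continuousAt_id.mul (Afun_continuousAt (by linarith) h1)).continuousWithinAt
  set g : ℝ → ℝ := fun y => sInf {w : ℝ | w ∈ Icc v₁ v₂ ∧ Phi w = y} with hg_def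
  have hg : ∀ y ∈ Icc (Phi v₁) (Phi v₂), g y ∈ Icc v₁ v₂ ∧ Phi (g y) = y :=
    fun y hy => sInf_inv_spec hv.le hPhiMono hPhiCont hy
  clear_value g
  set V : ℝ → ℝ := fun u => g (ρ * Phi u) with hV_def
  have hmap : ∀ u ∈ Icc u₁ u₂, ρ * Phi u ∈ Icc (Phi v₁) (Phi v₂) := by
    intro u hu'
    have h0 : 0 < u := lt_of_lt_of_le hu₁.1 hu'.1
    have h1 : u < 1 := lt_of_le_of_lt hu'.2 hu₂.2
    constructor
    · rw [hρ1]
      apply mul_le_mul_of_nonneg_left _ hρ0.le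
      rcases eq_or_lt_of_le hu'.1 with h | h
      · rw [h]
      · exact (Phi_lt hu₁.1 h h1).le
    · rw [hρ2]
      apply mul_le_mul_of_nonneg_left _ hρ0.le
      rcases eq_or_lt_of_le hu'.2 with h | h
      · rw [h]
      · exact (Phi_lt h0 h hu₂.2).le
  have hV : ∀ u ∈ Icc u₁ u₂, V u ∈ Icc v₁ v₂ ∧ Phi (V u) = ρ * Phi u :=
    fun u hu' => hg _ (hmap u hu')
  have hV₁ : V u₁ = v₁ := by
    have h := hV u₁ (left_mem_Icc.2 hu.le)
    apply hPhiMono.injOn h.1 (left_mem_Icc.2 hv.le)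
    rw [h.2, hρ1]
  have hV₂ : V u₂ = v₂ := by
    have h := hV u₂ (right_mem_Icc.2 hu.le)
    apply hPhiMono.injOn h.1 (right_mem_Icc.2 hv.le)
    rw [h.2, hρ2]
  clear_value V
  -- the log-product function
  set gg : ℝ → ℝ := fun u => Real.log u + Real.log (V u) + 2*Real.log (Afun (u * V u))
    - Real.log (Afun u) - Real.log (Afun (V u)) with hgg_def
  clear_value gg
  have hVCont : ContinuousOn V (Icc u₁ u₂) := by
    rw [hV_def]
    apply ContinuousOn.comp (inv_continuousOn hv hPhiMono hg) _ hmap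
    intro u hu'
    have h0 : 0 < u := lt_of_lt_of_le hu₁.1 hu'.1
    have h1 : u < 1 := lt_of_le_of_lt hu'.2 hu₂.2
    exact (continuousAt_const.mul
      (continuousAt_id.mul (Afun_continuousAt (by linarith) h1))).continuousWithinAt
  have hVrange : ∀ u ∈ Icc u₁ u₂, 0 < V u ∧ V u < 1 := by
    intro u hu'
    have h := (hV u hu').1
    exact ⟨lt_of_lt_of_le hv₁.1 h.1, lt_of_le_of_lt h.2 hv₂.2⟩
  have hggMono : StrictMonoOn gg (Icc u₁ u₂) := by
    apply strictMonoOn_of_deriv_pos (convex_Icc u₁ u₂)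
    · -- continuity
      rw [hgg_def]
      intro u hu'
      have h0 : 0 < u := lt_of_lt_of_le hu₁.1 hu'.1
      have h1 : u < 1 := lt_of_le_of_lt hu'.2 hu₂.2
      obtain ⟨hw0, hw1⟩ := hVrange u hu'
      have hvc : ContinuousWithinAt V (Icc u₁ u₂) u := hVCont u hu'
      have hsc : ContinuousWithinAt (fun u => u * V u) (Icc u₁ u₂) u :=
        continuousWithinAt_id.mul hvc
      have hs0' : 0 < u * V u := mul_pos h0 hw0
      have hs1' : u * V u < 1 := by
        have := mul_lt_mul'' h1 hw1 h0.le hw0.le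
        simpa using this
      apply ContinuousWithinAt.sub
      apply ContinuousWithinAt.sub
      apply ContinuousWithinAt.add
      apply ContinuousWithinAt.add
      · exact (Real.continuousAt_log h0.ne').continuousWithinAt
      · exact (Real.continuousAt_log hw0.ne').comp_continuousWithinAt hvc
      · apply ContinuousWithinAt.mul continuousWithinAt_const
        have hA : ContinuousWithinAt (fun z => Afun (z * V z)) (Icc u₁ u₂) u :=
          (Afun_continuousAt (show (-1:ℝ) < u * V u by linarith)
            hs1').comp_continuousWithinAt (f := fun z => z * V z) hsc
        exact (Real.continuousAt_log
          (Afun_pos hs0' hs1').ne').comp_continuousWithinAt (f := fun z => Afun (z * V z)) hA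
      · exact ((Real.continuousAt_log (Afun_pos h0 h1).ne').comp
          (Afun_continuousAt (by linarith) h1)).continuousWithinAt
      · have hA : ContinuousWithinAt (fun z => Afun (V z)) (Icc u₁ u₂) u :=
          (Afun_continuousAt (show (-1:ℝ) < V u by linarith)
            hw1).comp_continuousWithinAt (f := fun z => V z) hvc
        exact (Real.continuousAt_log
          (Afun_pos hw0 hw1).ne').comp_continuousWithinAt (f := fun z => Afun (V z)) hA
    · -- derivative positivity
      intro u hu'
      rw [interior_Icc] at hu'
      have h0 : 0 < u := lt_trans hu₁.1 hu'.1
      have h1 : u < 1 := lt_trans hu'.2 hu₂.2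
      have hy : ρ * Phi u ∈ Ioo (Phi v₁) (Phi v₂) := by
        constructor
        · rw [hρ1]; exact mul_lt_mul_of_pos_left (Phi_lt hu₁.1 hu'.1 h1) hρ0
        · rw [hρ2]; exact mul_lt_mul_of_pos_left (Phi_lt h0 hu'.2 hu₂.2) hρ0
      have hwIoo : V u ∈ Ioo v₁ v₂ := by
        simp only [hV_def]; exact inv_mem_Ioo hv hPhiMono hg hy
      have hw0 : 0 < V u := lt_trans hv₁.1 hwIoo.1
      have hw1 : V u < 1 := lt_trans hwIoo.2 hv₂.2
      have hΦVu : Phi (V u) = ρ * Phi u := (hV u (Ioo_subset_Icc_self hu')).2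
      have hVg : g (ρ * Phi u) = V u := by simp only [hV_def]
      have hw0g : 0 < g (ρ * Phi u) := by rw [hVg]; exact hw0
      have hw1g : g (ρ * Phi u) < 1 := by rw [hVg]; exact hw1
      have hgd : HasDerivAt g (Afun (V u) + (V u)*(2/(1-(V u)^2)))⁻¹ (ρ * Phi u) := by
        have h := inv_hasDerivAt hv hPhiMono hg hy (Phi_hasDerivAt hw0g hw1g)
          (ne_of_gt (Phi'_pos hw0g hw1g))
        rw [hVg] at h
        exact h
      have hVd : HasDerivAt V ((Afun (V u) + (V u)*(2/(1-(V u)^2)))⁻¹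
          * (ρ * (Afun u + u*(2/(1-u^2))))) u := by
        have hinner : HasDerivAt (fun u => ρ * Phi u) (ρ * (Afun u + u*(2/(1-u^2)))) u :=
          (Phi_hasDerivAt h0 h1).const_mul ρ
        have hcomp := hgd.comp u hinner
        have he : (g ∘ fun u => ρ * Phi u) = V := by rw [hV_def]; rfl
        rw [he] at hcomp
        exact hcomp
      set dV := (Afun (V u) + (V u)*(2/(1-(V u)^2)))⁻¹ * (ρ * (Afun u + u*(2/(1-u^2))))
        with hdV_def
      have hs0' : 0 < u * V u := mul_pos h0 hw0
      have hs1' : u * V u < 1 := by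
        have := mul_lt_mul'' h1 hw1 h0.le hw0.le
        simpa using this
      have t1 : HasDerivAt (fun z : ℝ => Real.log z) u⁻¹ u := Real.hasDerivAt_log h0.ne'
      have t2 : HasDerivAt (fun z => Real.log (V z)) ((V u)⁻¹ * dV) u :=
        (Real.hasDerivAt_log hw0.ne').comp u hVd
      have t3i : HasDerivAt (fun z => z * V z) (1 * V u + u * dV) u :=
        (hasDerivAt_id u).mul hVd
      have t3m : HasDerivAt (fun z => Afun (z * V z))
          (2/(1-(u * V u)^2) * (1 * V u + u * dV)) u :=
        by have := (Afun_hasDerivAt (by linarith) hs1').comp u t3i; exact this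
      have t3 : HasDerivAt (fun z => Real.log (Afun (z * V z)))
          ((Afun (u * V u))⁻¹ * (2/(1-(u * V u)^2) * (1 * V u + u * dV))) u :=
        by have := (Real.hasDerivAt_log (Afun_pos hs0' hs1').ne').comp u t3m; exact this
      have t4 : HasDerivAt (fun z => Real.log (Afun z)) ((Afun u)⁻¹ * (2/(1-u^2))) u :=
        (Real.hasDerivAt_log (Afun_pos h0 h1).ne').comp u (Afun_hasDerivAt (by linarith) h1)
      have t5 : HasDerivAt (fun z => Real.log (Afun (V z)))
          ((Afun (V u))⁻¹ * (2/(1-(V u)^2) * dV)) u := by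
        have : HasDerivAt (fun z => Afun (V z)) (2/(1-(V u)^2) * dV) u :=
          (Afun_hasDerivAt (by linarith) hw1).comp u hVd
        exact (Real.hasDerivAt_log (Afun_pos hw0 hw1).ne').comp u this
      have hgd' : HasDerivAt gg (u⁻¹ + ((V u)⁻¹ * dV)
          + 2*((Afun (u * V u))⁻¹ * (2/(1-(u * V u)^2) * (1 * V u + u * dV)))
          - (Afun u)⁻¹ * (2/(1-u^2))
          - (Afun (V u))⁻¹ * (2/(1-(V u)^2) * dV)) u := by
        rw [hgg_def]
        exact ((((t1.add t2).add (t3.const_mul 2)).sub t4).sub t5)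
      rw [hgd'.deriv]
      exact sign_core ⟨h0, h1⟩ ⟨hw0, hw1⟩ (by exact hΦVu) hdV_def
  -- endpoint comparison
  have hlt : gg u₁ < gg u₂ :=
    hggMono (left_mem_Icc.2 hu.le) (right_mem_Icc.2 hu.le) hu
  have hgg₁ : gg u₁ = Real.log u₁ + Real.log v₁ + 2*Real.log (Afun (u₁*v₁))
      - Real.log (Afun u₁) - Real.log (Afun v₁) := by simp only [hgg_def, hV₁]
  have hgg₂ : gg u₂ = Real.log u₂ + Real.log v₂ + 2*Real.log (Afun (u₂*v₂))
      - Real.log (Afun u₂) - Real.log (Afun v₂) := by simp only [hgg_def, hV₂]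
  have L1 : Real.log ((u₁*v₁) * Afun (u₁*v₁)^2 * (Afun u₂ * Afun v₂))
      = Real.log u₁ + Real.log v₁ + 2*Real.log (Afun (u₁*v₁))
        + (Real.log (Afun u₂) + Real.log (Afun v₂)) := by
    rw [Real.log_mul (mul_ne_zero hs₁0.ne' (pow_ne_zero 2 hc₁.ne'))
        (mul_ne_zero ha₂.ne' hb₂.ne'),
      Real.log_mul hs₁0.ne' (pow_ne_zero 2 hc₁.ne'),
      Real.log_mul hu₁.1.ne' hv₁.1.ne', Real.log_mul ha₂.ne' hb₂.ne', Real.log_pow]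
    push_cast; ring
  have L2 : Real.log ((u₂*v₂) * Afun (u₂*v₂)^2 * (Afun u₁ * Afun v₁))
      = Real.log u₂ + Real.log v₂ + 2*Real.log (Afun (u₂*v₂))
        + (Real.log (Afun u₁) + Real.log (Afun v₁)) := by
    rw [Real.log_mul (mul_ne_zero hs₂0.ne' (pow_ne_zero 2 hc₂.ne'))
        (mul_ne_zero ha₁.ne' hb₁.ne'),
      Real.log_mul hs₂0.ne' (pow_ne_zero 2 hc₂.ne'),
      Real.log_mul hu₂.1.ne' hv₂.1.ne', Real.log_mul ha₁.ne' hb₁.ne', Real.log_pow]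
    push_cast; ring
  have hlogeq : Real.log u₁ + Real.log v₁ + 2*Real.log (Afun (u₁*v₁))
        + (Real.log (Afun u₂) + Real.log (Afun v₂))
      = Real.log u₂ + Real.log v₂ + 2*Real.log (Afun (u₂*v₂))
        + (Real.log (Afun u₁) + Real.log (Afun v₁)) := by
    rw [← L1, ← L2, hprod]
  rw [hgg₁, hgg₂] at hlt
  linarith [hlt, hlogeq]


lemma inj_main {u₁ v₁ u₂ v₂ : ℝ} (hu₁ : u₁ ∈ Ioo (0:ℝ) 1) (hv₁ : v₁ ∈ Ioo (0:ℝ) 1)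
    (hu₂ : u₂ ∈ Ioo (0:ℝ) 1) (hv₂ : v₂ ∈ Ioo (0:ℝ) 1)
    (E1 : v₁ * Afun (u₁*v₁) / Afun u₁ = v₂ * Afun (u₂*v₂) / Afun u₂)
    (E2 : u₁ * Afun (u₁*v₁) / Afun v₁ = u₂ * Afun (u₂*v₂) / Afun v₂) :
    u₁ = u₂ ∧ v₁ = v₂ := by
  rcases lt_trichotomy u₁ u₂ with h | h | h
  · exfalso
    rcases lt_trichotomy v₁ v₂ with hvlt | hveq | hvgt
    · exact curve_contra hu₁ hu₂ hv₁ hv₂ h hvlt E1 E2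
    · subst hveq
      have k1 : v₁ * Afun (u₂*v₁)/Afun u₂ < v₁ * Afun (u₁*v₁)/Afun u₁ :=
        G1_anti_u hv₁ hu₁.1 h hu₂.2
      rw [E1] at k1
      exact lt_irrefl _ k1
    · have k1 : v₂ * Afun (u₂*v₂)/Afun u₂ < v₂ * Afun (u₁*v₂)/Afun u₁ :=
        G1_anti_u hv₂ hu₁.1 h hu₂.2
      have k2 : v₂ * Afun (u₁*v₂)/Afun u₁ < v₁ * Afun (u₁*v₁)/Afun u₁ :=
        G1_mono_v hu₁ hv₂.1 hvgt hv₁.2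
      rw [E1] at k2
      linarith
  · refine ⟨h, ?_⟩
    subst h
    rcases lt_trichotomy v₁ v₂ with hvlt | hveq | hvgt
    · exfalso
      have k2 : v₁ * Afun (u₁*v₁)/Afun u₁ < v₂ * Afun (u₁*v₂)/Afun u₁ :=
        G1_mono_v hu₁ hv₁.1 hvlt hv₂.2
      rw [E1] at k2
      exact lt_irrefl _ k2
    · exact hveq
    · exfalso
      have k2 : v₂ * Afun (u₁*v₂)/Afun u₁ < v₁ * Afun (u₁*v₁)/Afun u₁ :=
        G1_mono_v hu₁ hv₂.1 hvgt hv₁.2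
      rw [E1] at k2
      exact lt_irrefl _ k2
  · exfalso
    rcases lt_trichotomy v₂ v₁ with hvlt | hveq | hvgt
    · exact curve_contra hu₂ hu₁ hv₂ hv₁ h hvlt E1.symm E2.symm
    · subst hveq
      have k1 := G1_anti_u hv₂ hu₂.1 h hu₁.2
      rw [E1] at k1
      exact lt_irrefl _ k1
    · have k1 : v₁ * Afun (u₁*v₁)/Afun u₁ < v₁ * Afun (u₂*v₁)/Afun u₂ :=
        G1_anti_u hv₁ hu₂.1 h hu₁.2
      have k2 : v₁ * Afun (u₂*v₁)/Afun u₂ < v₂ * Afun (u₂*v₂)/Afun u₂ :=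
        G1_mono_v hu₂ hv₁.1 hvgt hv₂.2
      rw [← E1] at k2
      linarith

/-- In the open square `(0, log 2) × (0, log 2)`, the pair of partial derivatives of `f₂`
at a point uniquely determines the point. -/
theorem gradient_determines_point (x₁ y₁ x₂ y₂ : ℝ)
    (hx₁ : x₁ ∈ Set.Ioo (0 : ℝ) (Real.log 2)) (hy₁ : y₁ ∈ Set.Ioo (0 : ℝ) (Real.log 2))
    (hx₂ : x₂ ∈ Set.Ioo (0 : ℝ) (Real.log 2)) (hy₂ : y₂ ∈ Set.Ioo (0 : ℝ) (Real.log 2))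
    (h₁ : deriv (fun t => f₂ t y₁) x₁ = deriv (fun t => f₂ t y₂) x₂)
    (h₂ : deriv (fun t => f₂ x₁ t) y₁ = deriv (fun t => f₂ x₂ t) y₂) :
    x₁ = x₂ ∧ y₁ = y₂ := by
  have hp₁ := binEntInv_mem_Ioo hx₁
  have hq₁ := binEntInv_mem_Ioo hy₁
  have hp₂ := binEntInv_mem_Ioo hx₂
  have hq₂ := binEntInv_mem_Ioo hy₂
  have hr₁ := starOp_mem hp₁ hq₁
  have hr₂ := starOp_mem hp₂ hq₂
  rw [f2_deriv_fst hx₁ hy₁, f2_deriv_fst hx₂ hy₂] at h₁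
  rw [f2_deriv_snd hx₁ hy₁, f2_deriv_snd hx₂ hy₂] at h₂
  -- convert the logs to Afun form
  have hLp₁ : Real.log (1 - binEntInv x₁) - Real.log (binEntInv x₁)
      = Afun (1-2*binEntInv x₁) := L_eq_Afun hp₁.1 (by linarith [hp₁.2])
  have hLp₂ : Real.log (1 - binEntInv x₂) - Real.log (binEntInv x₂)
      = Afun (1-2*binEntInv x₂) := L_eq_Afun hp₂.1 (by linarith [hp₂.2])
  have hLq₁ : Real.log (1 - binEntInv y₁) - Real.log (binEntInv y₁)
      = Afun (1-2*binEntInv y₁) := L_eq_Afun hq₁.1 (by linarith [hq₁.2])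
  have hLq₂ : Real.log (1 - binEntInv y₂) - Real.log (binEntInv y₂)
      = Afun (1-2*binEntInv y₂) := L_eq_Afun hq₂.1 (by linarith [hq₂.2])
  have hLr₁ : Real.log (1 - starOp (binEntInv x₁) (binEntInv y₁))
        - Real.log (starOp (binEntInv x₁) (binEntInv y₁))
      = Afun ((1-2*binEntInv x₁)*(1-2*binEntInv y₁)) := by
    rw [L_eq_Afun hr₁.1 (by linarith [hr₁.2]), starOp_one_sub]
  have hLr₂ : Real.log (1 - starOp (binEntInv x₂) (binEntInv y₂))
        - Real.log (starOp (binEntInv x₂) (binEntInv y₂))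
      = Afun ((1-2*binEntInv x₂)*(1-2*binEntInv y₂)) := by
    rw [L_eq_Afun hr₂.1 (by linarith [hr₂.2]), starOp_one_sub]
  rw [hLp₁, hLp₂, hLr₁, hLr₂] at h₁
  rw [hLq₁, hLq₂, hLr₁, hLr₂] at h₂
  -- membership of the transformed variables
  have hu₁ : (1-2*binEntInv x₁) ∈ Ioo (0:ℝ) 1 := ⟨by linarith [hp₁.2], by linarith [hp₁.1]⟩
  have hu₂ : (1-2*binEntInv x₂) ∈ Ioo (0:ℝ) 1 := ⟨by linarith [hp₂.2], by linarith [hp₂.1]⟩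
  have hv₁ : (1-2*binEntInv y₁) ∈ Ioo (0:ℝ) 1 := ⟨by linarith [hq₁.2], by linarith [hq₁.1]⟩
  have hv₂ : (1-2*binEntInv y₂) ∈ Ioo (0:ℝ) 1 := ⟨by linarith [hq₂.2], by linarith [hq₂.1]⟩
  have E1 : (1-2*binEntInv y₁) * Afun ((1-2*binEntInv x₁)*(1-2*binEntInv y₁))
        / Afun (1-2*binEntInv x₁)
      = (1-2*binEntInv y₂) * Afun ((1-2*binEntInv x₂)*(1-2*binEntInv y₂))
        / Afun (1-2*binEntInv x₂) := by
    linear_combination h₁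
  have E2 : (1-2*binEntInv x₁) * Afun ((1-2*binEntInv x₁)*(1-2*binEntInv y₁))
        / Afun (1-2*binEntInv y₁)
      = (1-2*binEntInv x₂) * Afun ((1-2*binEntInv x₂)*(1-2*binEntInv y₂))
        / Afun (1-2*binEntInv y₂) := by
    linear_combination h₂
  obtain ⟨hueq, hveq⟩ := inj_main hu₁ hv₁ hu₂ hv₂ E1 E2
  have hpeq : binEntInv x₁ = binEntInv x₂ := by linarith
  have hqeq : binEntInv y₁ = binEntInv y₂ := by linarith
  constructor
  · rw [← (binEntInv_spec (Ioo_subset_Icc_self hx₁)).2,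
        ← (binEntInv_spec (Ioo_subset_Icc_self hx₂)).2, hpeq]
  · rw [← (binEntInv_spec (Ioo_subset_Icc_self hy₁)).2,
        ← (binEntInv_spec (Ioo_subset_Icc_self hy₂)).2, hqeq]
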